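/- Let F_q be a finite field and n a positive integer such that (1) q ≡ 3 (mod 4) and 8 divides n, and (2) rad(n) divides q − 1. Then every monic irreducible factor f of x^n − 1 in F_q[x] is of one of the following two types: (a) f = x^t − a for some positive integer t and a ∈ F_q^* such that x^t − a is irreducible in F_q[x] and divides x^n − 1 in F_q[x]; or (b) f = x^{2t} − (a + a^q)·x^t + a^{q+1} for some positive integer t and some a ∈ F_{q²} \ F_q such that x^t − a is irreducible in F_{q²}[x] and divides x^n − 1 in F_{q²}[x]. -/

import Mathlib

open Polynomial

section Aux

lemma aux_mem_range_algebraMap {F K : Type*} [Field F] [Fintype F] [Field K] [Fintype K]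
    [Algebra F K] {x : K} (h : x ^ Fintype.card F = x) :
    x ∈ Set.range (algebraMap F K) := by
  classical
  set c := Fintype.card F with hc
  have hc1 : 1 < c := Fintype.one_lt_card
  set P : K[X] := X ^ c - X with hP
  have hPne : P ≠ 0 := by
    intro h0
    have h1 : P.coeff c = 1 := by
      simp only [hP, Polynomial.coeff_sub, Polynomial.coeff_X_pow, Polynomial.coeff_X, if_pos rfl]
      rw [if_neg (by omega : ¬ (1 : ℕ) = c)]
      simp
    rw [h0] at h1
    simp at h1
  have hroot : ∀ y : K, y ^ c = y → y ∈ P.roots.toFinset := by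
    intro y hy
    rw [Multiset.mem_toFinset, Polynomial.mem_roots hPne]
    simp [hP, Polynomial.IsRoot, hy]
  have hsub : (Finset.univ.image (algebraMap F K)) ⊆ P.roots.toFinset := by
    intro y hy
    obtain ⟨b, _, rfl⟩ := Finset.mem_image.1 hy
    exact hroot _ (by rw [← map_pow, FiniteField.pow_card])
  have hcard1 : (Finset.univ.image (algebraMap F K)).card = c := by
    rw [Finset.card_image_of_injective _ (algebraMap F K).injective, Finset.card_univ]
  have hcard2 : P.roots.toFinset.card ≤ c := by
    refine le_trans (Multiset.toFinset_card_le _) (le_trans (Polynomial.card_roots' P) ?_)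
    refine le_trans (Polynomial.natDegree_sub_le _ _) ?_
    simp [Polynomial.natDegree_X_pow]
    omega
  have heq := Finset.eq_of_subset_of_card_le hsub (by omega)
  have hx : x ∈ P.roots.toFinset := hroot _ h
  rw [← heq] at hx
  obtain ⟨b, _, hb⟩ := Finset.mem_image.1 hx
  exact ⟨b, hb⟩

lemma aux_fact2 {x : ℕ} (hx : x % 4 = 2) : x.factorization 2 = 1 := by
  have hx0 : x ≠ 0 := by omega
  have h2 : 2 ∣ x := by omega
  have h4 : ¬ 4 ∣ x := by omega
  have hd : 2 ^ x.factorization 2 ∣ x := Nat.ordProj_dvd x 2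
  have h1 : 1 ≤ x.factorization 2 := by
    have := (Nat.Prime.pow_dvd_iff_le_factorization Nat.prime_two hx0).1
      (by rw [pow_one]; exact h2)
    omega
  by_contra hne
  have h2le : 2 ≤ x.factorization 2 := by omega
  exact h4 (dvd_trans (by rw [show (4:ℕ) = 2 ^ 2 by norm_num]; exact pow_dvd_pow 2 h2le) hd)

lemma aux_fd : ∀ n : ℕ, n.factorization 2 = padicValNat 2 n :=
  fun n => Nat.factorization_def n Nat.prime_two

lemma aux_lte {Q s p : ℕ} (hp : p.Prime) (hQ : 2 ≤ Q) (hs : 0 < s) (hpd : p ∣ Q - 1)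
    (h4 : 4 ∣ Q - 1) :
    (Q ^ s - 1).factorization p = (Q - 1).factorization p + s.factorization p := by
  haveI : Fact p.Prime := ⟨hp⟩
  have hQ4 : Q % 4 = 1 := by omega
  have hp2 := hp.two_le
  have hnp : ¬ p ∣ Q := by
    intro hdq
    have h1 : p ∣ 1 := by
      have := Nat.dvd_sub hdq hpd; simpa [(by omega : Q - (Q - 1) = 1)] using this
    have := Nat.dvd_one.1 h1; omega
  rcases hp.eq_two_or_odd' with rfl | hodd
  · have heven : ∀ r : ℕ, 0 < r → Even r →
        (Q ^ r - 1).factorization 2 = (Q - 1).factorization 2 + r.factorization 2 := by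
      intro r hr hre
      have key := padicValNat.pow_two_sub_pow (x := Q) (y := 1) (by omega) (by omega)
        (by omega) (by omega) hre
      simp only [one_pow] at key
      have hQp1 : (Q + 1).factorization 2 = 1 := aux_fact2 (by omega)
      simp only [aux_fd] at hQp1 ⊢
      omega
    rcases Nat.even_or_odd s with hse | hso
    · exact heven s hs hse
    · have hs1 : s % 2 = 1 := Nat.odd_iff.1 hso
      have hsf : s.factorization 2 = 0 := Nat.factorization_eq_zero_of_not_dvd (by omega)
      have hs2 : (2 * s).factorization 2 = 1 := by
        rw [Nat.factorization_mul (by omega) (by omega)]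
        simp [hsf, Nat.Prime.factorization_self Nat.prime_two]
      have h2s := heven (2 * s) (by omega) (even_two_mul s)
      rw [hs2] at h2s
      have hQs2 : 2 ≤ Q ^ s := Nat.one_lt_pow hs.ne' hQ
      have hQsm : Q ^ s % 4 = 1 := by
        rw [Nat.pow_mod, hQ4, one_pow]; rfl
      have hsplit : Q ^ (2 * s) - 1 = (Q ^ s - 1) * (Q ^ s + 1) := by
        have h1 : Q ^ (2 * s) = (Q ^ s) ^ 2 := by
          rw [mul_comm, pow_mul]
        obtain ⟨r, hr⟩ : ∃ r, Q ^ s = 2 + r := ⟨Q ^ s - 2, by omega⟩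
        have h2 : (2 + r) ^ 2 = (2 + r - 1) * (2 + r + 1) + 1 := by
          have : (2 + r - 1) = r + 1 := by omega
          rw [this]; ring
        rw [h1, hr, h2]; omega
      have hfac : (Q ^ (2 * s) - 1).factorization 2
          = (Q ^ s - 1).factorization 2 + (Q ^ s + 1).factorization 2 := by
        rw [hsplit, Nat.factorization_mul (by omega) (by omega)]; simp
      have hQsp1 : (Q ^ s + 1).factorization 2 = 1 := aux_fact2 (by omega)
      rw [hfac, hQsp1] at h2s
      omega
  · have key := padicValNat.pow_sub_pow hodd (x := Q) (y := 1) (by omega)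
      (by simpa using hpd) hnp hs.ne'
    simp only [one_pow] at key
    simp only [Nat.factorization_def _ hp]
    simpa using key

lemma aux_ord {Q m s : ℕ} (hQ : 2 ≤ Q) (hm : 0 < m) (hs : 0 < s)
    (hrad : ∀ p : ℕ, p.Prime → p ∣ m → p ∣ Q - 1) (h4 : 4 ∣ Q - 1)
    (hdvd : m ∣ Q ^ s - 1) : m / Nat.gcd m (Q - 1) ∣ s := by
  have hQ1 : 0 < Q - 1 := by omega
  have hQs : 2 ≤ Q ^ s := Nat.one_lt_pow hs.ne' hQ
  have hgd : Nat.gcd m (Q - 1) ∣ m := Nat.gcd_dvd_left _ _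
  have ht0 : m / Nat.gcd m (Q - 1) ≠ 0 :=
    (Nat.div_pos (Nat.le_of_dvd hm hgd) (Nat.gcd_pos_of_pos_left _ hm)).ne'
  rw [← Nat.factorization_le_iff_dvd ht0 hs.ne', Nat.factorization_div hgd,
    Nat.factorization_gcd hm.ne' hQ1.ne']
  intro p
  simp only [Finsupp.tsub_apply, Finsupp.inf_apply]
  by_cases hp : p.Prime
  · set k := m.factorization p with hk
    set a := (Q - 1).factorization p with ha
    rcases Nat.eq_zero_or_pos k with hk0 | hk1
    · simp [hk0]
    · have hpm : p ∣ m := Nat.dvd_of_factorization_pos (by omega)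
      have hpQ : p ∣ Q - 1 := hrad p hp hpm
      have ha1 : 1 ≤ a := by
        have := (Nat.Prime.pow_dvd_iff_le_factorization hp hQ1.ne').1
          (by rw [pow_one]; exact hpQ)
        omega
      have hkle : k ≤ (Q ^ s - 1).factorization p := by
        refine (Nat.Prime.pow_dvd_iff_le_factorization hp (by omega)).1 ?_
        exact dvd_trans (hk ▸ Nat.ordProj_dvd m p) hdvd
      rw [aux_lte hp hQ hs hpQ h4] at hkle
      rw [min_def]
      split <;> omega
  · simp [Nat.factorization_eq_zero_of_not_prime _ hp]

lemma aux_eq_of_monic_dvd {K : Type*} [Field K] {p g : K[X]} (hp : p.Monic) (hg : g.Monic)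
    (h : g ∣ p) (hd : p.natDegree ≤ g.natDegree) : g = p := by
  obtain ⟨c, hc⟩ := h
  have hc0 : c ≠ 0 := by
    intro h0; rw [h0, mul_zero] at hc; exact hp.ne_zero hc
  have hdeg : p.natDegree = g.natDegree + c.natDegree := by
    rw [hc, Polynomial.natDegree_mul hg.ne_zero hc0]
  have hcd : c.natDegree = 0 := by omega
  have hlc : c.leadingCoeff = 1 := by
    have := hp.leadingCoeff
    rw [hc, Polynomial.leadingCoeff_mul, hg.leadingCoeff, one_mul] at this
    exact this
  have : c = 1 := by
    rw [Polynomial.eq_C_of_natDegree_eq_zero hcd]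
    rw [Polynomial.eq_C_of_natDegree_eq_zero hcd] at hlc
    simp only [Polynomial.leadingCoeff_C] at hlc
    simp [hlc]
  rw [hc, this, mul_one]

lemma aux_irred_eq {K : Type*} [Field K] {f d : K[X]} (hfm : f.Monic) (hfi : Irreducible f)
    (hdm : d.Monic) (hd1 : 0 < d.natDegree) (hdvd : d ∣ f) : d = f := by
  obtain ⟨c, hc⟩ := hdvd
  have hdnu : ¬ IsUnit d := Polynomial.not_isUnit_of_natDegree_pos d hd1
  have hcu : IsUnit c := (hfi.isUnit_or_isUnit hc).resolve_left hdnu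
  have hcd : c.natDegree = 0 := Polynomial.natDegree_eq_zero_of_isUnit hcu
  have hfd : f.natDegree ≤ d.natDegree := by
    rw [hc, Polynomial.natDegree_mul hdm.ne_zero hcu.ne_zero, hcd]
    omega
  exact aux_eq_of_monic_dvd hfm hdm ⟨c, hc⟩ hfd

/-- Every monic irreducible factor of `X^n - 1` over a finite field `K` with
`rad n ∣ card K - 1` and `4 ∣ card K - 1` is a binomial. -/
lemma aux_binomial_factor {K : Type*} [Field K] [Fintype K] {n : ℕ} (hn : 0 < n)
    (hrad : ∀ p : ℕ, p.Prime → p ∣ n → p ∣ Fintype.card K - 1)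
    (h4 : 4 ∣ Fintype.card K - 1)
    {g : K[X]} (hgm : g.Monic) (hgi : Irreducible g) (hgd : g ∣ X ^ n - 1) :
    ∃ (t : ℕ) (a : K), 0 < t ∧ g = X ^ t - C a := by
  classical
  set Q := Fintype.card K with hQdef
  have hQ2 : 2 ≤ Q := Fintype.one_lt_card
  have hQ1 : 0 < Q - 1 := by omega
  haveI : Fact (Irreducible g) := ⟨hgi⟩
  have hg0 : g ≠ 0 := hgm.ne_zero
  set K' := AdjoinRoot g with hK'
  let pb : PowerBasis K K' := AdjoinRoot.powerBasis hg0
  haveI : Module.Finite K K' := pb.finite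
  haveI : Finite K' := Module.finite_of_finite K
  letI : Fintype K' := Fintype.ofFinite K'
  set α : K' := AdjoinRoot.root g with hα
  have hαn : α ^ n = 1 := by
    obtain ⟨c, hc⟩ := hgd
    have h1 : (AdjoinRoot.mk g) (X ^ n - 1 : K[X]) = α ^ n - 1 := by
      simp [hα]
    have h2 : (AdjoinRoot.mk g) (X ^ n - 1 : K[X]) = 0 := by
      rw [hc, map_mul, AdjoinRoot.mk_self, zero_mul]
    rw [h1] at h2
    exact sub_eq_zero.1 h2
  have hα0 : α ≠ 0 := by
    intro h0
    rw [h0, zero_pow hn.ne'] at hαn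
    exact zero_ne_one hαn
  have hfin : IsOfFinOrder α := isOfFinOrder_iff_pow_eq_one.2 ⟨n, hn, hαn⟩
  set m := orderOf α with hm
  have hm0 : 0 < m := hfin.orderOf_pos
  have hmn : m ∣ n := orderOf_dvd_of_pow_eq_one hαn
  have hmrad : ∀ p : ℕ, p.Prime → p ∣ m → p ∣ Q - 1 :=
    fun p hp hpm => hrad p hp (hpm.trans hmn)
  set G := Nat.gcd m (Q - 1) with hG
  have hGm : G ∣ m := Nat.gcd_dvd_left _ _
  have hGQ : G ∣ Q - 1 := Nat.gcd_dvd_right _ _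
  set t := m / G with ht
  have ht0 : 0 < t := Nat.div_pos (Nat.le_of_dvd hm0 hGm) (Nat.gcd_pos_of_pos_left _ hm0)
  have hmdvd : m ∣ t * (Q - 1) := by
    obtain ⟨u, hu⟩ := hGQ
    refine ⟨u, ?_⟩
    rw [ht, hu, ← mul_assoc, Nat.div_mul_cancel hGm]
  have hfix : α ^ (t * (Q - 1)) = 1 := orderOf_dvd_iff_pow_eq_one.1 hmdvd
  have hatQ : (α ^ t) ^ Q = α ^ t := by
    rw [← pow_mul]
    have h5 : t * Q = t * (Q - 1) + t := by
      have h6 : Q - 1 + 1 = Q := by omega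
      calc t * Q = t * (Q - 1 + 1) := by rw [h6]
      _ = t * (Q - 1) + t := by ring
    rw [h5, pow_add, hfix, one_mul]
  obtain ⟨b, hb⟩ := aux_mem_range_algebraMap (F := K) hatQ
  have hball : minpoly K α = g := by
    rw [hα, AdjoinRoot.minpoly_root hg0, hgm.leadingCoeff]
    simp
  have haeval : aeval α ((X : K[X]) ^ t - C b) = 0 := by
    simp [hb]
  have hgdvd2 : g ∣ (X : K[X]) ^ t - C b := hball ▸ minpoly.dvd K α haeval
  set s := g.natDegree with hs
  have hs0 : 0 < s := hgi.natDegree_pos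
  have hcard : Fintype.card K' = Q ^ s := by
    rw [Module.card_eq_pow_finrank (K := K) (V := K'), pb.finrank]
    rfl
  have hαcard : α ^ (Q ^ s - 1) = 1 := by
    have h1 : α ^ Fintype.card K' = α := FiniteField.pow_card α
    rw [hcard] at h1
    have h2 : 0 < Q ^ s := by positivity
    have h3 : α ^ (Q ^ s - 1) * α = α := by
      rw [← pow_succ]
      have h7 : Q ^ s - 1 + 1 = Q ^ s := by omega
      rw [h7, h1]
    calc α ^ (Q ^ s - 1) = α ^ (Q ^ s - 1) * α * α⁻¹ := by
          rw [mul_assoc, mul_inv_cancel₀ hα0, mul_one]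
    _ = α * α⁻¹ := by rw [h3]
    _ = 1 := mul_inv_cancel₀ hα0
  have hmQs : m ∣ Q ^ s - 1 := orderOf_dvd_of_pow_eq_one hαcard
  have hts : t ∣ s := aux_ord hQ2 hm0 hs0 hmrad h4 hmQs
  have hst : s ≤ t := by
    have hne : ((X : K[X]) ^ t - C b) ≠ 0 := (monic_X_pow_sub_C b ht0.ne').ne_zero
    have := Polynomial.natDegree_le_of_dvd hgdvd2 hne
    rwa [natDegree_X_pow_sub_C] at this
  have hteq : t = s := le_antisymm (Nat.le_of_dvd hs0 hts) hst
  refine ⟨t, b, ht0, aux_eq_of_monic_dvd (monic_X_pow_sub_C b ht0.ne') hgm hgdvd2 ?_⟩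
  rw [natDegree_X_pow_sub_C]
  omega

end Aux

/-- If `q ≡ 3 (mod 4)`, `8 ∣ n` and `rad(n) ∣ q - 1`, then every monic irreducible factor
of `x^n - 1` over `F_q` is either a binomial `x^t - a` (irreducible and dividing `x^n - 1`
over `F_q`), or a trinomial `x^{2t} - (a + a^q)x^t + a^{q+1}` where `a ∈ F_{q²} \ F_q` and
`x^t - a` is irreducible and divides `x^n - 1` over `F_{q²}`. -/
theorem irreducible_factors_binomial_or_trinomial {F F2 : Type*}
    [Field F] [Fintype F] [Field F2] [Fintype F2] [Algebra F F2]
    (q : ℕ) (hq : q = Fintype.card F) (hq2 : Fintype.card F2 = q ^ 2)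
    (n : ℕ) (hn : 0 < n) (h1 : q % 4 = 3) (h2 : 8 ∣ n)
    (h3 : (∏ p ∈ n.primeFactors, p) ∣ (q - 1)) :
    ∀ f : Polynomial F, f.Monic → Irreducible f → f ∣ (X ^ n - 1 : Polynomial F) →
      (∃ (t : ℕ) (a : F), 0 < t ∧ a ≠ 0 ∧ f = X ^ t - C a ∧
          Irreducible (X ^ t - C a : Polynomial F) ∧
          (X ^ t - C a) ∣ (X ^ n - 1 : Polynomial F)) ∨
      (∃ (t : ℕ) (a : F2), 0 < t ∧ a ∉ Set.range (algebraMap F F2) ∧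
          Irreducible (X ^ t - C a : Polynomial F2) ∧
          (X ^ t - C a) ∣ (X ^ n - 1 : Polynomial F2) ∧
          f.map (algebraMap F F2) =
            X ^ (2 * t) - C (a + a ^ q) * X ^ t + C (a ^ (q + 1))) := by
  intro f hfm hfi hfd
  classical
  have hqcard : 2 ≤ q := hq ▸ Fintype.one_lt_card
  have hqodd : q % 2 = 1 := by omega
  -- 8 ∣ q ^ 2 - 1
  have h8 : 8 ∣ q ^ 2 - 1 := by
    obtain ⟨k, hk⟩ : ∃ k, q = 2 * k + 1 := ⟨q / 2, by omega⟩
    have : q ^ 2 = 8 * (k * (k + 1) / 2) + 1 := by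
      have h2k : 2 ∣ k * (k + 1) := (Nat.even_mul_succ_self k).two_dvd
      obtain ⟨u, hu⟩ := h2k
      have : q ^ 2 = 4 * (k * (k+1)) + 1 := by rw [hk]; ring
      rw [this, hu]
      omega
    omega
  have hq21 : q - 1 ∣ q ^ 2 - 1 := by
    obtain ⟨r, hr⟩ : ∃ r, q = r + 1 := ⟨q - 1, by omega⟩
    subst hr
    refine ⟨r + 2, ?_⟩
    have h9 : (r + 1) ^ 2 = r * (r + 2) + 1 := by ring
    have h10 : r + 1 - 1 = r := rfl
    rw [h10]
    omega
  have hradq : ∀ p : ℕ, p.Prime → p ∣ n → p ∣ q - 1 := by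
    intro p hp hpn
    exact dvd_trans (Finset.dvd_prod_of_mem _ (Nat.mem_primeFactors.2 ⟨hp, hpn, hn.ne'⟩)) h3
  have hradQ : ∀ p : ℕ, p.Prime → p ∣ n → p ∣ Fintype.card F2 - 1 := by
    intro p hp hpn
    rw [hq2]
    exact (hradq p hp hpn).trans hq21
  have h4Q : 4 ∣ Fintype.card F2 - 1 := by
    rw [hq2]; omega
  set ρ := algebraMap F F2 with hρ
  have hρi : Function.Injective ρ := ρ.injective
  -- the q-power map as a ring hom on F2
  letI : CharP F (ringChar F) := ringChar.charP F
  obtain ⟨k, hp₀, hk⟩ := FiniteField.card F (ringChar F)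
  haveI : Fact (ringChar F).Prime := ⟨hp₀⟩
  haveI : CharP F2 (ringChar F) := charP_of_injective_algebraMap hρi (ringChar F)
  set σ : F2 →+* F2 := iterateFrobenius F2 (ringChar F) k with hσ
  have hσdef : ∀ x : F2, σ x = x ^ q := by
    intro x
    rw [hσ, iterateFrobenius_def, ← hk, ← hq]
  have hσρ : ∀ x : F, σ (ρ x) = ρ x := by
    intro x
    rw [hσdef, ← map_pow, hq, FiniteField.pow_card]
  have hσσ : ∀ x : F2, σ (σ x) = x := by
    intro x
    rw [hσdef, hσdef, ← pow_mul, ← pow_two, ← hq2, FiniteField.pow_card]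
  -- basic facts about f over F2
  have hXn : (X ^ n - 1 : F[X]).map ρ = (X ^ n - 1 : F2[X]) := by
    simp [Polynomial.map_sub, Polynomial.map_pow]
  have hfmap_dvd : f.map ρ ∣ (X ^ n - 1 : F2[X]) := by
    obtain ⟨c, hc⟩ := hfd
    exact ⟨c.map ρ, by rw [← hXn, hc, Polynomial.map_mul]⟩
  have hfmapm : (f.map ρ).Monic := hfm.map ρ
  have hfmapd : 0 < (f.map ρ).natDegree := by
    rw [Polynomial.natDegree_map]
    exact hfi.natDegree_pos
  obtain ⟨g, hgm, hgi, hgdvd⟩ :=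
    (f.map ρ).exists_monic_irreducible_factor
      (Polynomial.not_isUnit_of_natDegree_pos _ hfmapd)
  obtain ⟨t, a, ht0, hgeq⟩ := aux_binomial_factor hn hradQ h4Q hgm hgi
    (hgdvd.trans hfmap_dvd)
  rw [hgeq] at hgm hgi hgdvd
  by_cases hcase : a ^ q = a
  · -- binomial case
    left
    have haR : a ∈ Set.range ρ := by
      refine aux_mem_range_algebraMap ?_
      rw [← hq]; exact hcase
    obtain ⟨a₀, ha₀⟩ := haR
    have hmap : ((X : F[X]) ^ t - C a₀).map ρ = (X : F2[X]) ^ t - C a := by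
      simp [Polynomial.map_sub, Polynomial.map_pow, ha₀]
    have hdvdf : ((X : F[X]) ^ t - C a₀) ∣ f := by
      rw [← Polynomial.map_dvd_map' ρ, hmap]
      exact hgdvd
    have hfeq : (X : F[X]) ^ t - C a₀ = f :=
      aux_irred_eq hfm hfi (monic_X_pow_sub_C a₀ ht0.ne')
        (by rw [natDegree_X_pow_sub_C]; exact ht0) hdvdf
    have ha₀0 : a₀ ≠ 0 := by
      intro h0
      rw [h0] at hfeq
      have hXdvd : (X : F[X]) ^ t ∣ X ^ n - 1 := by
        rw [← sub_zero ((X : F[X]) ^ t), ← Polynomial.C_0]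
        rw [← hfeq] at hfd
        simpa using hfd
      have := Polynomial.eval_dvd (x := (0 : F)) hXdvd
      rw [Polynomial.eval_pow, Polynomial.eval_X, Polynomial.eval_sub, Polynomial.eval_pow,
        Polynomial.eval_X, Polynomial.eval_one, zero_pow ht0.ne', zero_pow hn.ne'] at this
      rw [zero_dvd_iff, zero_sub, neg_eq_zero] at this
      exact one_ne_zero this
    exact ⟨t, a₀, ht0, ha₀0, hfeq.symm, hfeq ▸ hfi, hfeq ▸ hfd⟩
  · -- trinomial case
    right
    have hσa : σ a = a ^ q := hσdef a
    have hfmapσ : (f.map ρ).map σ = f.map ρ := by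
      rw [Polynomial.map_map]
      congr 1
      exact RingHom.ext hσρ
    have hmapg : ((X : F2[X]) ^ t - C a).map σ = (X : F2[X]) ^ t - C (a ^ q) := by
      simp [Polynomial.map_sub, Polynomial.map_pow, hσa]
    have hg'dvd : ((X : F2[X]) ^ t - C (a ^ q)) ∣ f.map ρ := by
      obtain ⟨c, hc⟩ := hgdvd
      refine ⟨c.map σ, ?_⟩
      rw [← hmapg, ← Polynomial.map_mul, ← hc, hfmapσ]
    have hne : ((X : F2[X]) ^ t - C a) ≠ ((X : F2[X]) ^ t - C (a ^ q)) := by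
      intro h
      rw [sub_right_inj] at h
      exact hcase (Polynomial.C_injective h).symm
    have hnd : ¬ ((X : F2[X]) ^ t - C a) ∣ ((X : F2[X]) ^ t - C (a ^ q)) := by
      intro hdd
      exact hne (aux_eq_of_monic_dvd (monic_X_pow_sub_C _ ht0.ne')
        (monic_X_pow_sub_C _ ht0.ne') hdd
        (by rw [natDegree_X_pow_sub_C, natDegree_X_pow_sub_C]))
    have hcop : IsCoprime ((X : F2[X]) ^ t - C a) ((X : F2[X]) ^ t - C (a ^ q)) :=
      (EuclideanDomain.dvd_or_coprime _ _ hgi).resolve_left hnd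
    have hmul : ((X : F2[X]) ^ t - C a) * ((X : F2[X]) ^ t - C (a ^ q)) ∣ f.map ρ :=
      hcop.mul_dvd hgdvd hg'dvd
    set h : F2[X] := ((X : F2[X]) ^ t - C a) * ((X : F2[X]) ^ t - C (a ^ q)) with hh
    have hhm : h.Monic := (monic_X_pow_sub_C _ ht0.ne').mul (monic_X_pow_sub_C _ ht0.ne')
    have hhσ : h.map σ = h := by
      rw [hh, Polynomial.map_mul, hmapg]
      have h2 : ((X : F2[X]) ^ t - C (a ^ q)).map σ = (X : F2[X]) ^ t - C a := by
        have h3 : σ (a ^ q) = a := by rw [← hσa, hσσ]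
        rw [Polynomial.map_sub, Polynomial.map_pow, Polynomial.map_X, Polynomial.map_C, h3]
      rw [h2, mul_comm]
    have hcoeff : ∀ i : ℕ, h.coeff i ∈ Set.range ρ := by
      intro i
      have h1 : σ (h.coeff i) = h.coeff i := by
        conv_rhs => rw [← hhσ]
        rw [Polynomial.coeff_map]
      refine aux_mem_range_algebraMap ?_
      rw [← hq, ← hσdef]
      exact h1
    have hlift : h ∈ Polynomial.lifts ρ := (Polynomial.lifts_iff_coeff_lifts h).2 hcoeff
    obtain ⟨h₀, hh₀⟩ := (Polynomial.mem_lifts h).1 hlift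
    have hh₀m : h₀.Monic := Polynomial.monic_of_injective hρi (by rw [hh₀]; exact hhm)
    have hh₀d : h₀ ∣ f := by
      rw [← Polynomial.map_dvd_map' ρ, hh₀]
      exact hmul
    have hhdeg : h.natDegree = 2 * t := by
      rw [hh, Polynomial.natDegree_mul (monic_X_pow_sub_C _ ht0.ne').ne_zero
        (monic_X_pow_sub_C _ ht0.ne').ne_zero, natDegree_X_pow_sub_C, natDegree_X_pow_sub_C]
      omega
    have hh₀deg : 0 < h₀.natDegree := by
      have : (h₀.map ρ).natDegree = h₀.natDegree := Polynomial.natDegree_map ρ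
      rw [hh₀, hhdeg] at this
      omega
    have hfeq : h₀ = f := aux_irred_eq hfm hfi hh₀m hh₀deg hh₀d
    have hfmapeq : f.map ρ = h := by rw [← hfeq, hh₀]
    refine ⟨t, a, ht0, ?_, hgi, hgdvd.trans hfmap_dvd, ?_⟩
    · rintro ⟨a₁, ha₁⟩
      apply hcase
      rw [← ha₁, ← map_pow, hq, FiniteField.pow_card]
    · rw [hfmapeq, hh]
      have hexp : a ^ (q + 1) = a * a ^ q := by
        rw [pow_succ']
      rw [hexp, C_add, C_mul]
      ring
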